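/- Let G be a directed graph with real arc lengths, no negative cycle, and unique shortest paths. Let S be a generic, independent set of weighted sites. Then for each site s ∈ S, the subgraph of G induced by the graphic Voronoi cell cell_G(s,S) is connected (every vertex of the cell is reachable from v_s within the cell). -/
import Mathlib


inductive DWalk {V : Type*} (A : V → V → Prop) : V → V → Type _ where
  | nil : (v : V) → DWalk A v v
  | cons : {u v w : V} → A u v → DWalk A v w → DWalk A u w

def DWalk.len {V : Type*} {A : V → V → Prop} (f : V → V → ℝ) :
    ∀ {u w : V}, DWalk A u w → ℝ
  | _, _, .nil _ => 0
  | u, _, .cons (v := v) _ p => f u v + DWalk.len f p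

def DWalk.support {V : Type*} {A : V → V → Prop} :
    ∀ {u w : V}, DWalk A u w → List V
  | u, _, .nil _ => [u]
  | u, _, .cons _ p => u :: DWalk.support p

def DWalk.lastArc {V : Type*} {A : V → V → Prop} :
    ∀ {u w : V}, DWalk A u w → Option (V × V)
  | _, _, .nil _ => none
  | u, _, .cons (v := v) _ p =>
      match DWalk.lastArc p with
      | none => some (u, v)
      | some pr => some pr

/-- Shortest-path distance: infimum of lengths of walks. -/
noncomputable def ddist {V : Type*} (A : V → V → Prop) (f : V → V → ℝ) (s t : V) : ℝ :=
  sInf {x : ℝ | ∃ p : DWalk A s t, DWalk.len f p = x}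


/-- The graphic Voronoi cell of a weighted site `s` with respect to a set of
weighted sites `S`. -/
def vorCell {V : Type*} (A : V → V → Prop) (f : V → V → ℝ)
    (S : Finset (V × ℝ)) (s : V × ℝ) : Set V :=
  {x | ∀ t ∈ S, t ≠ s → s.2 + ddist A f s.1 x ≤ t.2 + ddist A f t.1 x}


namespace DWalk
variable {V : Type*} {A : V → V → Prop} {f : V → V → ℝ}

def append : ∀ {a b c : V}, DWalk A a b → DWalk A b c → DWalk A a c
  | _, _, _, .nil _, q => q
  | _, _, _, .cons h p, q => .cons h (p.append q)

lemma len_append : ∀ {a b c : V} (p : DWalk A a b) (q : DWalk A b c),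
    (p.append q).len f = p.len f + q.len f
  | _, _, _, .nil _, q => by simp [append, len]
  | _, _, _, .cons h p, q => by
      simp [append, len, len_append p q]; ring

lemma split : ∀ {a b : V} (p : DWalk A a b) (y : V), y ∈ p.support →
    ∃ (q : DWalk A a y) (r : DWalk A y b),
      q.len f + r.len f = p.len f ∧ r.support <:+ p.support
  | _, _, .nil v, y, hy => by
      simp [support] at hy
      subst hy
      exact ⟨.nil y, .nil y, by simp [len], List.suffix_rfl⟩
  | a, b, .cons (v := v) h p, y, hy => by
      simp only [support, List.mem_cons] at hy
      rcases hy with rfl | hy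
      · exact ⟨.nil y, .cons h p, by simp [len], List.suffix_rfl⟩
      · obtain ⟨q, r, hlen, hsuf⟩ := split p y hy
        exact ⟨.cons h q, r, by simp [len]; linarith,
          hsuf.trans (List.suffix_cons _ _)⟩

lemma reduce (hNoNeg : ∀ (v : V) (c : DWalk A v v), 0 ≤ c.len f) :
    ∀ {a b : V} (p : DWalk A a b),
      ∃ q : DWalk A a b, q.support.Nodup ∧ q.len f ≤ p.len f
  | _, _, .nil v => ⟨.nil v, by simp [support], le_refl _⟩
  | a, b, .cons (v := v) h p => by
      obtain ⟨q, hnd, hle⟩ := reduce hNoNeg p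
      by_cases ha : a ∈ q.support
      · obtain ⟨q1, r, hlen, hsuf⟩ := split (f := f) q a ha
        have hcyc : (0:ℝ) ≤ (DWalk.cons h q1).len f := hNoNeg a _
        simp only [len] at hcyc ⊢
        exact ⟨r, hsuf.sublist.nodup hnd, by linarith⟩
      · exact ⟨.cons h q, by simp [support, ha, hnd], by simp [len]; linarith⟩

lemma support_ne_nil : ∀ {a b : V} (p : DWalk A a b), p.support ≠ []
  | _, _, .nil v => by simp [support]
  | _, _, .cons h p => by simp [support]

lemma head_support : ∀ {a b : V} (p : DWalk A a b), p.support.head? = some a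
  | _, _, .nil v => by simp [support]
  | _, _, .cons h p => by simp [support]

lemma support_injective {a b : V} (p : DWalk A a b) :
    ∀ q : DWalk A a b, p.support = q.support → p = q := by
  induction p with
  | nil v =>
    intro q hs
    cases q with
    | nil => rfl
    | cons h q' =>
      exfalso
      simp [support] at hs
      exact support_ne_nil q' hs
  | cons h p ih =>
    intro q hs
    cases q with
    | nil =>
      exfalso
      simp [support] at hs
      exact support_ne_nil p hs
    | cons h' q' =>
      simp only [support, List.cons.injEq] at hs
      rename_i u v w v'
      have hv : v = v' := by
        have h1 := head_support p
        have h2 := head_support q'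
        rw [hs.2] at h1; rw [h2] at h1; exact (Option.some_injective _ h1).symm
      subst hv
      rw [ih q' hs.2]

end DWalk

section DDist
variable {V : Type*} [Fintype V] {A : V → V → Prop} {f : V → V → ℝ}

lemma ddist_le_len (hNoNeg : ∀ (v : V) (c : DWalk A v v), 0 ≤ c.len f)
    {a b : V} (p : DWalk A a b) : ddist A f a b ≤ p.len f := by
  classical
  have hfin : Finite {q : DWalk A a b // q.support.Nodup} := by
    apply Finite.of_injective
      (fun q : {q : DWalk A a b // q.support.Nodup} =>
        (⟨q.1.support, q.2⟩ : {l : List V // l.Nodup}))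
    rintro ⟨q1, h1⟩ ⟨q2, h2⟩ h
    simp only [Subtype.mk.injEq] at h ⊢
    exact DWalk.support_injective q1 q2 h
  set N : Set ℝ := {x | ∃ q : DWalk A a b, q.support.Nodup ∧ q.len f = x} with hN
  have hNfin : N.Finite := by
    apply Set.Finite.subset (Set.finite_range
      (fun q : {q : DWalk A a b // q.support.Nodup} => q.1.len f))
    rintro x ⟨q, hnd, rfl⟩
    exact ⟨⟨q, hnd⟩, rfl⟩
  have hNne : N.Nonempty := by
    obtain ⟨q, hnd, _⟩ := DWalk.reduce hNoNeg p
    exact ⟨_, q, hnd, rfl⟩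
  obtain ⟨m, hmN, hmin⟩ := Set.exists_min_image N id hNfin hNne
  have hbdd : BddBelow {x : ℝ | ∃ p : DWalk A a b, DWalk.len f p = x} := by
    refine ⟨m, ?_⟩
    rintro x ⟨p', rfl⟩
    obtain ⟨q, hnd, hle⟩ := DWalk.reduce hNoNeg p'
    exact le_trans (hmin _ ⟨q, hnd, rfl⟩) hle
  exact csInf_le hbdd ⟨p, rfl⟩

end DDist

/-- for a generic, independent set of sites, each graphic Voronoi
cell induces a connected subgraph: every vertex of the cell is reachable from the
site by a directed path staying inside the cell. -/
theorem stmt6 {V : Type*} [Fintype V] (A : V → V → Prop) (lam : V → V → ℝ)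
    (hNoNeg : ∀ (v : V) (c : DWalk A v v), 0 ≤ DWalk.len lam c)
    (huniq : ∀ a b : V, ∃! p : {q : DWalk A a b // (DWalk.support q).Nodup},
      DWalk.len lam p.1 = ddist A lam a b)
    (S : Finset (V × ℝ))
    (hgen : ∀ x : V, ∀ s ∈ S, ∀ t ∈ S, s ≠ t →
      s.2 + ddist A lam s.1 x ≠ t.2 + ddist A lam t.1 x)
    (hind : ∀ s ∈ S, (vorCell A lam S s).Nonempty) :
    ∀ s ∈ S, ∀ x ∈ vorCell A lam S s,
      ∃ p : DWalk A s.1 x, ∀ y ∈ DWalk.support p, y ∈ vorCell A lam S s := by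
  intro s hs x hx
  obtain ⟨⟨p, hnd⟩, hp, _⟩ := huniq s.1 x
  refine ⟨p, ?_⟩
  intro y hy t ht hts
  obtain ⟨q, r, hlen, _⟩ := DWalk.split (f := lam) p y hy
  have h1 : ddist A lam s.1 y ≤ q.len lam := ddist_le_len hNoNeg q
  have h2 : ddist A lam y x ≤ r.len lam := ddist_le_len hNoNeg r
  have h3 : ddist A lam t.1 x ≤ ddist A lam t.1 y + ddist A lam y x := by
    obtain ⟨⟨p1, _⟩, hp1, _⟩ := huniq t.1 y
    obtain ⟨⟨p2, _⟩, hp2, _⟩ := huniq y x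
    calc ddist A lam t.1 x ≤ (p1.append p2).len lam := ddist_le_len hNoNeg _
    _ = p1.len lam + p2.len lam := DWalk.len_append p1 p2
    _ = ddist A lam t.1 y + ddist A lam y x := by rw [hp1, hp2]
  have h4 := hx t ht hts
  simp only at hp
  linarith
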